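/- Let (X,ρ) be a metric space, let P be an abstract porosity on X, and let A ⊆ X be a set that is not σ-P-porous. Then the set A \ K_P(A) is σ-P-porous, where K_P(A) is the set of all x ∈ A at which A is not σ-P-porous. -/

import Mathlib

open Metric Filter Set

/-- An abstract porosity on a metric space `X`: a relation between points and subsets
of `X` satisfying the axioms (A1), (A2), (A3). -/
structure AbstractPorosity (X : Type*) [MetricSpace X] where
  rel : X → Set X → Prop
  mono : ∀ (x : X) (A B : Set X), A ⊆ B → rel x B → rel x A
  loc : ∀ (x : X) (A : Set X), rel x A ↔ ∃ r > 0, rel x (A ∩ Metric.ball x r)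
  clos : ∀ (x : X) (A : Set X), rel x A ↔ rel x (closure A)

variable {X : Type*} [MetricSpace X]

/-- `A` is `P`-porous if `P(x,A)` holds at each point `x ∈ A`. -/
def AbstractPorosity.Porous (P : AbstractPorosity X) (A : Set X) : Prop :=
  ∀ x ∈ A, P.rel x A

/-- `A` is σ-`P`-porous if it is a countable union of `P`-porous sets. -/
def AbstractPorosity.SigmaPorous (P : AbstractPorosity X) (A : Set X) : Prop :=
  ∃ f : ℕ → Set X, (∀ n, P.Porous (f n)) ∧ A = ⋃ n, f n

/-- `A` is σ-`P`-porous at `x` if some `A ∩ B(x,r)` (r>0) is σ-`P`-porous. -/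
def AbstractPorosity.SigmaPorousAt (P : AbstractPorosity X) (A : Set X) (x : X) : Prop :=
  ∃ r > 0, P.SigmaPorous (A ∩ Metric.ball x r)

/-- The kernel `K_P(A)`: points of `A` at which `A` is not σ-`P`-porous. -/
def AbstractPorosity.kernel (P : AbstractPorosity X) (A : Set X) : Set X :=
  {x ∈ A | ¬ P.SigmaPorousAt A x}

section PorosityAux
variable {X : Type*} [MetricSpace X]


open Classical in
noncomputable def porIdx (U : X → Set X) (B : Set X) (z : X) : X :=
  if h : ∃ d, d ∈ B ∧ z ∈ U d then
    (IsWellFounded.wf (r := (WellOrderingRel : X → X → Prop))).min {d | d ∈ B ∧ z ∈ U d} h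
  else z

open Classical in
lemma porIdx_mem (U : X → Set X) (B : Set X) {z : X} (h : ∃ d, d ∈ B ∧ z ∈ U d) :
    porIdx U B z ∈ B ∧ z ∈ U (porIdx U B z) := by
  rw [porIdx, dif_pos h]
  exact (IsWellFounded.wf (r := (WellOrderingRel : X → X → Prop))).min_mem _ h

open Classical in
lemma porIdx_min (U : X → Set X) (B : Set X) {z d : X} (h : ∃ d, d ∈ B ∧ z ∈ U d)
    (hd : d ∈ B) (hzd : z ∈ U d) : ¬ WellOrderingRel d (porIdx U B z) := by
  rw [porIdx, dif_pos h]
  exact (IsWellFounded.wf (r := (WellOrderingRel : X → X → Prop))).not_lt_min {d | d ∈ B ∧ z ∈ U d} (x := d) ⟨hd, hzd⟩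

noncomputable def porD (U : X → Set X) (B : Set X) : ℕ → X → Set X
  | n, c =>
    ⋃ z ∈ {z | z ∈ B ∧ porIdx U B z = c ∧ (∀ m, m < n → ∀ d, z ∉ porD U B m d) ∧
        Metric.ball z (3 * (2:ℝ)⁻¹ ^ n) ⊆ U c},
      Metric.ball z ((2:ℝ)⁻¹ ^ n)
  termination_by n _ => n

lemma mem_porD {U : X → Set X} {B : Set X} {n : ℕ} {c y : X} :
    y ∈ porD U B n c ↔ ∃ z, (z ∈ B ∧ porIdx U B z = c ∧
      (∀ m, m < n → ∀ d, z ∉ porD U B m d) ∧ Metric.ball z (3 * (2:ℝ)⁻¹ ^ n) ⊆ U c) ∧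
      y ∈ Metric.ball z ((2:ℝ)⁻¹ ^ n) := by
  conv_lhs => rw [porD]
  simp only [mem_iUnion, Set.mem_setOf_eq, exists_prop]

lemma porD_subset {U : X → Set X} {B : Set X} {n : ℕ} {c : X} : porD U B n c ⊆ U c := by
  intro y hy
  obtain ⟨z, ⟨_, _, _, hb⟩, hyz⟩ := mem_porD.1 hy
  apply hb
  have ha : (0:ℝ) < (2:ℝ)⁻¹ ^ n := by positivity
  exact Metric.mem_ball.2 (lt_of_lt_of_le (Metric.mem_ball.1 hyz) (by linarith))

lemma porD_cover {U : X → Set X} {B : Set X} (hUopen : ∀ c, IsOpen (U c))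
    (hself : ∀ z ∈ B, z ∈ U z) {b : X} (hb : b ∈ B) : ∃ n c, b ∈ porD U B n c := by
  have hex : ∃ d, d ∈ B ∧ b ∈ U d := ⟨b, hb, hself b hb⟩
  obtain ⟨hcB, hbc⟩ := porIdx_mem U B hex
  obtain ⟨ε, hε, hball⟩ := Metric.isOpen_iff.1 (hUopen (porIdx U B b)) b hbc
  obtain ⟨n, hn⟩ : ∃ n : ℕ, (2:ℝ)⁻¹ ^ n < ε / 3 :=
    exists_pow_lt_of_lt_one (by positivity) (by norm_num)
  by_cases H : ∃ m, m < n ∧ ∃ d, b ∈ porD U B m d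
  · obtain ⟨m, _, d, h⟩ := H; exact ⟨m, d, h⟩
  · refine ⟨n, porIdx U B b, mem_porD.2 ⟨b, ⟨hb, rfl, ?_, ?_⟩, Metric.mem_ball_self (by positivity)⟩⟩
    · intro m hm d hmd; exact H ⟨m, hm, d, hmd⟩
    · intro y hy
      apply hball
      exact Metric.mem_ball.2 (lt_of_lt_of_le (Metric.mem_ball.1 hy) (by linarith))

lemma porD_sep {U : X → Set X} {B : Set X} (hself : ∀ z ∈ B, z ∈ U z)
    {n : ℕ} {c c' y w : X} (hy : y ∈ porD U B n c) (hw : w ∈ porD U B n c')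
    (hd : dist y w < (2:ℝ)⁻¹ ^ n) : c = c' := by
  obtain ⟨z, ⟨hzB, hzc, _, hzball⟩, hyz⟩ := mem_porD.1 hy
  obtain ⟨z', ⟨hz'B, hz'c, _, hz'ball⟩, hwz'⟩ := mem_porD.1 hw
  by_contra hne
  set a := (2:ℝ)⁻¹ ^ n with ha
  have hyzd : dist y z < a := Metric.mem_ball.1 hyz
  have hwzd : dist w z' < a := Metric.mem_ball.1 hwz'
  have hzz' : dist z z' < 3 * a := by
    calc dist z z' ≤ dist z y + dist y w + dist w z' := dist_triangle4 z y w z'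
    _ < a + a + a := by rw [dist_comm z y]; linarith
    _ = 3 * a := by ring
  have hz'Uc : z' ∈ U c := hzball (Metric.mem_ball.2 (by rw [dist_comm]; exact hzz'))
  have hzUc' : z ∈ U c' := hz'ball (Metric.mem_ball.2 hzz')
  have hcB : c ∈ B := by
    rw [← hzc]; exact (porIdx_mem U B ⟨z, hzB, hself z hzB⟩).1
  have hc'B : c' ∈ B := by
    rw [← hz'c]; exact (porIdx_mem U B ⟨z', hz'B, hself z' hz'B⟩).1
  have h1 : ¬ WellOrderingRel c (porIdx U B z') := porIdx_min U B ⟨z', hz'B, hself z' hz'B⟩ hcB hz'Uc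
  have h2 : ¬ WellOrderingRel c' (porIdx U B z) := porIdx_min U B ⟨z, hzB, hself z hzB⟩ hc'B hzUc'
  rw [hz'c] at h1
  rw [hzc] at h2
  rcases trichotomous_of (WellOrderingRel : X → X → Prop) c c' with h | h | h
  · exact h1 h
  · exact hne h
  · exact h2 h

end PorosityAux


/-- If `A` is not σ-`P`-porous, then `A \ K_P(A)` is σ-`P`-porous. -/
theorem sigmaPorous_diff_kernel {X : Type*} [MetricSpace X]
    (P : AbstractPorosity X) (A : Set X) (hA : ¬ P.SigmaPorous A) :
    P.SigmaPorous (A \ P.kernel A) := by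
  classical
  have hBeq : A \ P.kernel A = {x | x ∈ A ∧ P.SigmaPorousAt A x} := by
    ext x
    simp only [AbstractPorosity.kernel, Set.mem_diff, Set.mem_setOf_eq, Set.mem_sep_iff]
    tauto
  rw [hBeq]
  set B : Set X := {x | x ∈ A ∧ P.SigmaPorousAt A x} with hBdef
  have hr : ∀ x : X, ∃ r : ℝ, x ∈ B → (0 < r ∧ P.SigmaPorous (A ∩ Metric.ball x r)) := by
    intro x
    by_cases hx : x ∈ B
    · obtain ⟨r, hr0, hrp⟩ := hx.2
      exact ⟨r, fun _ => ⟨hr0, hrp⟩⟩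
    · exact ⟨1, fun h => absurd h hx⟩
  choose r hrspec using hr
  set U : X → Set X := fun x => Metric.ball x (r x) with hUdef
  have hself : ∀ z ∈ B, z ∈ U z := fun z hz => Metric.mem_ball_self (hrspec z hz).1
  have hUopen : ∀ c, IsOpen (U c) := fun c => Metric.isOpen_ball
  have hp : ∀ c : X, ∃ p : ℕ → Set X,
      c ∈ B → (∀ k, P.Porous (p k)) ∧ A ∩ U c = ⋃ k, p k := by
    intro c
    by_cases hc : c ∈ B
    · obtain ⟨f, hf1, hf2⟩ := (hrspec c hc).2
      exact ⟨f, fun _ => ⟨hf1, hf2⟩⟩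
    · exact ⟨fun _ => ∅, fun h => absurd h hc⟩
  choose p hpspec using hp
  set Q : ℕ → ℕ → Set X := fun n k => ⋃ c ∈ B, (p c k ∩ porD U B n c) with hQdef
  have hQpor : ∀ n k, P.Porous (Q n k) := by
    intro n k y hy
    simp only [hQdef, mem_iUnion, exists_prop] at hy
    obtain ⟨c, hcB, hyp, hyD⟩ := hy
    have hrel : P.rel y (p c k) := ((hpspec c hcB).1 k) y hyp
    obtain ⟨ρ, hρ0, hρ⟩ := (P.loc y (p c k)).1 hrel
    have ha : (0:ℝ) < (2:ℝ)⁻¹ ^ n := by positivity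
    have hsub : Q n k ∩ Metric.ball y (min ρ ((2:ℝ)⁻¹ ^ n)) ⊆ p c k ∩ Metric.ball y ρ := by
      rintro w ⟨hwQ, hwb⟩
      simp only [hQdef, mem_iUnion, exists_prop] at hwQ
      obtain ⟨c', hc'B, hwp, hwD⟩ := hwQ
      have hdyw : dist y w < (2:ℝ)⁻¹ ^ n := by
        have := Metric.mem_ball.1 hwb
        rw [dist_comm] at this
        exact lt_of_lt_of_le this (min_le_right _ _)
      have hcc : c = c' := porD_sep hself hyD hwD hdyw
      rw [← hcc] at hwp
      refine ⟨hwp, Metric.mem_ball.2 ?_⟩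
      exact lt_of_lt_of_le (Metric.mem_ball.1 hwb) (min_le_left _ _)
    exact (P.loc y (Q n k)).2 ⟨min ρ ((2:ℝ)⁻¹ ^ n), lt_min hρ0 ha, P.mono _ _ _ hsub hρ⟩
  refine ⟨fun m => B ∩ Q m.unpair.1 m.unpair.2, ?_, ?_⟩
  · intro m x hx
    exact P.mono _ _ _ inter_subset_right (hQpor _ _ x hx.2)
  · apply Set.Subset.antisymm
    · intro b hbB
      obtain ⟨n, c, hbD⟩ := porD_cover hUopen hself hbB
      have hcB : c ∈ B := by
        obtain ⟨z, ⟨hzB, hzc, -, -⟩, -⟩ := mem_porD.1 hbD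
        rw [← hzc]
        exact (porIdx_mem U B ⟨z, hzB, hself z hzB⟩).1
      have hbU : b ∈ U c := porD_subset hbD
      have hbp : b ∈ ⋃ k, p c k := by
        rw [← (hpspec c hcB).2]
        exact ⟨hbB.1, hbU⟩
      obtain ⟨k, hk⟩ := mem_iUnion.1 hbp
      refine mem_iUnion.2 ⟨Nat.pair n k, hbB, ?_⟩
      rw [Nat.unpair_pair]
      exact mem_iUnion₂.2 ⟨c, hcB, hk, hbD⟩
    · intro b hb
      obtain ⟨m, hm⟩ := mem_iUnion.1 hb
      exact hm.1
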